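/- arXiv:1610.06894 — 3 statements merged into one kernel-verified Lean document; each statement's English description precedes it below -/
import Mathlib

section
/- Let $X$ be a Banach space, $D \subseteq X$ a subspace, $A : D \to X$ a linear operator, $\partial X$ another Banach space and $B : D \to \partial X$ a surjective linear operator. Let $A_0$ be the restriction of $A$ to $\ker B$. If $\lambda$ is in the resolvent set of $A_0$, then $D$ is the direct sum $D = D(A_0) \oplus \ker(\lambda - A)$, i.e. $D(A_0) \cap \ker(\lambda - A) = \{0\}$ and $D(A_0) + \ker(\lambda - A) = D$. -/
/-- Let `X` be a Banach space, `D ⊆ X` a subspace, `A : D → X` linear,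
`∂X` another Banach space and `B : D → ∂X` a surjective linear operator. Let `A₀` be the
restriction of `A` to `ker B`. If `λ ∈ ρ(A₀)` (i.e. `λ - A₀ : ker B → X` is bijective),
then `D = D(A₀) ⊕ ker (λ - A)`. -/
theorem stmt0 {X Y : Type*}
    [NormedAddCommGroup X] [NormedSpace ℂ X] [CompleteSpace X]
    [NormedAddCommGroup Y] [NormedSpace ℂ Y] [CompleteSpace Y]
    (D : Submodule ℂ X) (A : D →ₗ[ℂ] X) (B : D →ₗ[ℂ] Y)
    (hB : Function.Surjective B) (l : ℂ)
    (hres : Function.Bijective fun u : LinearMap.ker B => l • ((u : D) : X) - A u) :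
    LinearMap.ker B ⊓ LinearMap.ker (l • D.subtype - A) = ⊥ ∧
    LinearMap.ker B ⊔ LinearMap.ker (l • D.subtype - A) = ⊤ := by
  obtain ⟨hinj, hsurj⟩ := hres
  constructor
  · ext u
    simp only [Submodule.mem_inf, LinearMap.mem_ker, Submodule.mem_bot]
    constructor
    · rintro ⟨hu1, hu2⟩
      have h0 : (fun u : LinearMap.ker B => l • ((u : D) : X) - A u) ⟨u, hu1⟩ =
          (fun u : LinearMap.ker B => l • ((u : D) : X) - A u) 0 := by
        simp only [LinearMap.sub_apply, LinearMap.smul_apply, Submodule.coe_subtype] at hu2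
        simpa using hu2
      have h1 := hinj h0
      exact Subtype.ext_iff.mp h1
    · rintro rfl; simp
  · rw [eq_top_iff]
    intro u _
    obtain ⟨v, hv⟩ := hsurj (l • (u : X) - A u)
    have hmem : u - (v : D) ∈ LinearMap.ker (l • D.subtype - A) := by
      simp only [LinearMap.mem_ker, LinearMap.sub_apply, LinearMap.smul_apply,
        Submodule.coe_subtype, map_sub, Submodule.coe_sub, smul_sub]
      simp only at hv
      rw [hv]; abel
    have : u = (v : D) + (u - (v : D)) := by abel
    rw [this]
    exact Submodule.add_mem_sup v.2 hmem
end

section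
/- In the setting of Greiner perturbation (Banach spaces $X$, $D \hookrightarrow X$, $\partial X$; continuous linear $A : D \to X$, surjective continuous $B : D \to \partial X$, continuous $\Phi : \overline{D} \to \partial X$; $A_0 = A|_{\ker B}$; $S_\lambda = (B|_{\ker(\lambda - A)})^{-1}$ for $\lambda \in \rho(A_0)$): if $\lambda \in \rho(A_0)$ and $I - S_\lambda \Phi$ is invertible as an operator on $\overline{D}$, then $\lambda \in \rho(A_\Phi)$ and $R(\lambda, A_\Phi) = (I - S_\lambda \Phi)^{-1} R(\lambda, A_0)$. -/
/-- Greiner setting: if `λ ∈ ρ(A₀)` (with resolvent `R₀ = R(λ,A₀)` and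
solution operator `S = S_λ`) and `I - S_λΦ` is invertible on `E = \overline{D}` with
inverse `U`, then `λ ∈ ρ(A_Φ)` and `R(λ, A_Φ) = (I - S_λΦ)⁻¹ R(λ, A₀)`. -/
theorem stmt3 {X D Y : Type*}
    [NormedAddCommGroup X] [NormedSpace ℂ X] [CompleteSpace X]
    [NormedAddCommGroup D] [NormedSpace ℂ D] [CompleteSpace D]
    [NormedAddCommGroup Y] [NormedSpace ℂ Y] [CompleteSpace Y]
    (ι : D →L[ℂ] X) (hι : Function.Injective ι)
    (A : D →L[ℂ] X) (B : D →L[ℂ] Y) (hB : Function.Surjective B)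
    (E : Submodule ℂ X)
    (hE : E = (LinearMap.range (ι : D →ₗ[ℂ] X)).topologicalClosure)
    (hmem : ∀ u : D, ι u ∈ E)
    (Φ : E →L[ℂ] Y) (l : ℂ)
    (S : Y →L[ℂ] D)
    (hS : ∀ h : Y, l • ι (S h) - A (S h) = 0 ∧ B (S h) = h)
    (R0 : X →L[ℂ] D)
    (hR0 : ∀ f : X, B (R0 f) = 0 ∧ l • ι (R0 f) - A (R0 f) = f)
    (hR0' : ∀ u : D, B u = 0 → R0 (l • ι u - A u) = u)
    (U : E →L[ℂ] E)
    (hU1 : ∀ e : E, U (e - ⟨ι (S (Φ e)), hmem _⟩) = e)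
    (hU2 : ∀ e : E, U e - ⟨ι (S (Φ (U e))), hmem _⟩ = e) :
    (∀ f : X, ∃! u : D, B u = Φ ⟨ι u, hmem u⟩ ∧ l • ι u - A u = f) ∧
    (∀ (f : X) (u : D), B u = Φ ⟨ι u, hmem u⟩ → l • ι u - A u = f →
      (ι u : X) = (U ⟨ι (R0 f), hmem _⟩ : X)) := by
  -- key: any solution u satisfies ⟨ι u⟩ = U ⟨ι (R0 f)⟩ and u = R0 f + S (Φ ⟨ι u⟩)
  have key : ∀ (f : X) (u : D), B u = Φ ⟨ι u, hmem u⟩ → l • ι u - A u = f →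
      (⟨ι u, hmem u⟩ : E) = U ⟨ι (R0 f), hmem _⟩ ∧
      u = R0 f + S (Φ ⟨ι u, hmem u⟩) := by
    intro f u hBu hAu
    set s := S (Φ ⟨ι u, hmem u⟩) with hs
    have hBv : B (u - s) = 0 := by
      simp [map_sub, hBu, (hS (Φ ⟨ι u, hmem u⟩)).2, hs]
    have heq : l • ι (u - s) - A (u - s) = f := by
      have h1 := (hS (Φ ⟨ι u, hmem u⟩)).1
      have : l • ι (u - s) - A (u - s)
          = (l • ι u - A u) - (l • ι s - A s) := by
        simp only [map_sub, smul_sub]; abel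
      rw [this, hAu, hs, h1, sub_zero]
    have hv : R0 f = u - s := by
      have := hR0' (u - s) hBv
      rw [heq] at this
      exact this
    have hsub : (⟨ι (R0 f), hmem _⟩ : E)
        = (⟨ι u, hmem u⟩ : E) - ⟨ι s, hmem s⟩ := by
      apply Subtype.ext
      simp [hv, map_sub]
    have hU := hU1 (⟨ι u, hmem u⟩ : E)
    constructor
    · rw [hsub]
      exact (hU).symm
    · rw [hv]; abel
  refine ⟨fun f => ?_, fun f u hBu hAu => ?_⟩
  · set e0 : E := ⟨ι (R0 f), hmem _⟩ with he0
    set u := R0 f + S (Φ (U e0)) with hu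
    have hcoe : (⟨ι u, hmem u⟩ : E) = U e0 := by
      apply Subtype.ext
      have h2 := hU2 e0
      have h3 : (U e0 : X) - ι (S (Φ (U e0))) = ι (R0 f) := by
        have := congrArg (Subtype.val) h2
        push_cast at this
        exact this
      have h4 : (U e0 : X) = ι (R0 f) + ι (S (Φ (U e0))) := by
        rw [← h3]; abel
      simp [hu, map_add, h4]
    have hBu : B u = Φ ⟨ι u, hmem u⟩ := by
      rw [hcoe]
      simp [hu, map_add, (hR0 f).1, (hS (Φ (U e0))).2]
    have hAu : l • ι u - A u = f := by
      have h1 := (hS (Φ (U e0))).1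
      have h2 := (hR0 f).2
      have : l • ι u - A u = (l • ι (R0 f) - A (R0 f))
          + (l • ι (S (Φ (U e0))) - A (S (Φ (U e0)))) := by
        simp only [hu, map_add, smul_add]; abel
      rw [this, h1, h2, add_zero]
    refine ⟨u, ⟨hBu, hAu⟩, ?_⟩
    intro v ⟨hBv, hAv⟩
    obtain ⟨hv1, hv2⟩ := key f v hBv hAv
    rw [hv2, hv1, ← he0, hu]
  · exact congrArg Subtype.val (key f u hBu hAu).1
end

section
/- In the Greiner perturbation setting, suppose additionally that $A_0$ generates a holomorphic semigroup, so that $M := \sup_{\Re\lambda > \rho} \|\lambda R(\lambda, A_0)\| < \infty$ for some $\rho$, and suppose that for all $\lambda$ with $\Re\lambda > \rho$ the operator $I - S_\lambda \Phi$ is invertible on $\overline{D}$ with $C := \sup_{\Re\lambda > \rho} \|(I - S_\lambda \Phi)^{-1}\| < \infty$. Then $\sup_{\Re\lambda > \rho} \|\lambda R(\lambda, A_\Phi)\| \leq C M < \infty$; in particular $A_\Phi$ generates a holomorphic semigroup on $X$. -/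
/-- Greiner setting.  Suppose `A₀` generates a holomorphic semigroup, so
that `‖λ R(λ,A₀)‖ ≤ M` on the half-plane `Re λ > ρ`, and that for all such `λ` the operator
`I - S_λΦ` is invertible on `E = \overline{D}` with `‖(I - S_λΦ)⁻¹‖ ≤ C`.  Then for every
`λ` with `Re λ > ρ` one has `λ ∈ ρ(A_Φ)` and `‖λ R(λ, A_Φ)‖ ≤ C·M`; in particular `A_Φ`
generates a holomorphic semigroup on `X`. -/
theorem stmt4 {X D Y : Type*}
    [NormedAddCommGroup X] [NormedSpace ℂ X] [CompleteSpace X]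
    [NormedAddCommGroup D] [NormedSpace ℂ D] [CompleteSpace D]
    [NormedAddCommGroup Y] [NormedSpace ℂ Y] [CompleteSpace Y]
    (ι : D →L[ℂ] X) (hι : Function.Injective ι)
    (A : D →L[ℂ] X) (B : D →L[ℂ] Y) (hB : Function.Surjective B)
    (E : Submodule ℂ X)
    (hE : E = (LinearMap.range (ι : D →ₗ[ℂ] X)).topologicalClosure)
    (hmem : ∀ u : D, ι u ∈ E)
    (Φ : E →L[ℂ] Y) (ρ M C : ℝ)
    (R0 : ℂ → X →L[ℂ] D)
    (hR0 : ∀ l : ℂ, ρ < l.re → ∀ f : X,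
      B (R0 l f) = 0 ∧ l • ι (R0 l f) - A (R0 l f) = f)
    (hR0' : ∀ l : ℂ, ρ < l.re → ∀ u : D, B u = 0 → R0 l (l • ι u - A u) = u)
    (hM : ∀ l : ℂ, ρ < l.re → ∀ f : X, ‖l‖ * ‖ι (R0 l f)‖ ≤ M * ‖f‖)
    (S : ℂ → Y →L[ℂ] D)
    (hS : ∀ l : ℂ, ρ < l.re → ∀ h : Y,
      l • ι (S l h) - A (S l h) = 0 ∧ B (S l h) = h)
    (U : ℂ → E →L[ℂ] E)
    (hU1 : ∀ l : ℂ, ρ < l.re → ∀ e : E, U l (e - ⟨ι (S l (Φ e)), hmem _⟩) = e)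
    (hU2 : ∀ l : ℂ, ρ < l.re → ∀ e : E, U l e - ⟨ι (S l (Φ (U l e))), hmem _⟩ = e)
    (hC : ∀ l : ℂ, ρ < l.re → ∀ e : E, ‖U l e‖ ≤ C * ‖e‖) :
    ∀ l : ℂ, ρ < l.re →
      (∀ f : X, ∃! u : D, B u = Φ ⟨ι u, hmem u⟩ ∧ l • ι u - A u = f) ∧
      (∀ (f : X) (u : D), B u = Φ ⟨ι u, hmem u⟩ → l • ι u - A u = f →
        ‖l‖ * ‖ι u‖ ≤ C * M * ‖f‖) := by
  intro l hl
  -- First, a reconstruction lemma: any solution u with B u = Φ ⟨ι u⟩ satisfies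
  -- u = R0 l f + S l (Φ ⟨ι u⟩) and ⟨ι u⟩ = U l ⟨ι (R0 l f)⟩.
  have recon : ∀ (f : X) (u : D), B u = Φ ⟨ι u, hmem u⟩ → l • ι u - A u = f →
      u = R0 l f + S l (B u) ∧
      (⟨ι u, hmem u⟩ : E) = U l ⟨ι (R0 l f), hmem _⟩ := by
    intro f u hb hf
    have hw : B (u - S l (B u)) = 0 := by
      simp [map_sub, (hS l hl (B u)).2]
    have hfw : l • ι (u - S l (B u)) - A (u - S l (B u)) = f := by
      have h0 := (hS l hl (B u)).1
      rw [map_sub, map_sub, smul_sub]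
      rw [← hf]
      rw [sub_sub_sub_comm] at *
      rw [h0, sub_zero]
    have hw' := hR0' l hl (u - S l (B u)) hw
    rw [hfw] at hw'
    have hu : u = R0 l f + S l (B u) := by
      rw [hw']; abel
    refine ⟨hu, ?_⟩
    have hsub : (⟨ι u, hmem u⟩ : E) - ⟨ι (S l (Φ (⟨ι u, hmem u⟩ : E))), hmem _⟩
        = ⟨ι (R0 l f), hmem _⟩ := by
      apply Subtype.ext
      show ι u - ι (S l (Φ (⟨ι u, hmem u⟩ : E))) = ι (R0 l f)
      rw [← hb, hw', map_sub]
    have := hU1 l hl (⟨ι u, hmem u⟩ : E)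
    rw [hsub] at this
    exact this.symm
  constructor
  · -- existence and uniqueness
    intro f
    set e0 : E := ⟨ι (R0 l f), hmem _⟩ with he0
    set e : E := U l e0 with he
    have h2 : (e : X) - ι (S l (Φ e)) = ι (R0 l f) := congrArg Subtype.val (hU2 l hl e0)
    have key : (⟨ι (R0 l f + S l (Φ e)), hmem _⟩ : E) = e := by
      apply Subtype.ext
      show ι (R0 l f + S l (Φ e)) = (e : X)
      rw [map_add, ← h2]; abel
    refine ⟨R0 l f + S l (Φ e), ⟨?_, ?_⟩, ?_⟩
    · rw [key, map_add, (hR0 l hl f).1, (hS l hl (Φ e)).2, zero_add]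
    · rw [map_add, map_add, smul_add]
      have := (hR0 l hl f).2
      have h4 := (hS l hl (Φ e)).1
      calc l • ι (R0 l f) + l • ι (S l (Φ e)) - (A (R0 l f) + A (S l (Φ e)))
          = (l • ι (R0 l f) - A (R0 l f)) + (l • ι (S l (Φ e)) - A (S l (Φ e))) := by abel
        _ = f := by rw [this, h4, add_zero]
    · intro u ⟨hb, hf⟩
      obtain ⟨hu, hiu⟩ := recon f u hb hf
      rw [hu, hb, hiu]
  · -- the norm bound
    intro f u hb hf
    obtain ⟨hu, hiu⟩ := recon f u hb hf
    have hnorm : ‖ι u‖ ≤ C * ‖ι (R0 l f)‖ := by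
      have h1 : ‖(⟨ι u, hmem u⟩ : E)‖ = ‖ι u‖ := rfl
      have h2 : ‖(⟨ι (R0 l f), hmem _⟩ : E)‖ = ‖ι (R0 l f)‖ := rfl
      have := hC l hl (⟨ι (R0 l f), hmem _⟩ : E)
      rw [← hiu] at this
      rw [h1, h2] at this
      exact this
    rcases le_or_gt 0 C with hC0 | hC0
    · have h2 := hM l hl f
      nlinarith [norm_nonneg l, norm_nonneg (ι u), norm_nonneg (ι (R0 l f)), norm_nonneg f,
        mul_le_mul_of_nonneg_left hnorm (norm_nonneg l),
        mul_le_mul_of_nonneg_left h2 hC0]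
    · -- C < 0 forces E = 0, hence everything trivial
      have hE0 : ∀ e : E, ‖e‖ = 0 := by
        intro e
        have h1 := hC l hl e
        have h2 := norm_nonneg (U l e)
        nlinarith [norm_nonneg e]
      have hiu0 : ι u = 0 := by
        have := hE0 (⟨ι u, hmem u⟩ : E)
        simpa using this
      have hu0 : u = 0 := hι (by simp [hiu0])
      have hf0 : f = 0 := by rw [← hf, hu0]; simp
      simp [hiu0, hf0]
end
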